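/- Let n ≥ 1, Ω ⊆ 𝕆_sⁿ and f : Ω → 𝕆. The following are equivalent: (i) f is a slice function; (ii) (stem function form) there exists F = (F₁,F₂) : Ω_{s₁} → 𝕆² such that f(x+yI) = F₁(x,y) + I·F₂(x,y) for every (x,y) ∈ Ω_{s₁} and every I ∈ 𝕊 with x+yI ∈ Ω; (iii) (linear form for I) for every (x,y) ∈ ℝⁿ×ℝⁿ and all I,J,K ∈ 𝕊 with J ≠ K and x+yI, x+yJ, x+yK ∈ Ω, f(x+yI) = (J−K)⁻¹·(J·f(x+yJ) − K·f(x+yK)) + I·((J−K)⁻¹·(f(x+yJ) − f(x+yK))); (iv) (linear form for f) for every (x,y) ∈ ℝⁿ×ℝⁿ and all I,J,K ∈ 𝕊 with J ≠ K and x+yI, x+yJ, x+yK ∈ Ω, f(x+yI) = (I−K)·((J−K)⁻¹·f(x+yJ)) + (I−J)·((K−J)⁻¹·f(x+yK)). (All products are octonion products with exactly the parenthesization written; 𝕆 is non-associative.) -/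

import Mathlib

/-! Octonions via the Cayley–Dickson construction on the quaternions,
the n-dimensional quadratic cone, the slice topology, and slice regularity. -/

noncomputable section
open Quaternion Topology

/-- The octonions, as `ℍ × ℍ` with the (L²) Euclidean norm and
Cayley–Dickson multiplication. -/
abbrev Oct : Type := WithLp 2 (ℍ × ℍ)

namespace Oct

def c1 (p : Oct) : ℍ := (WithLp.equiv 2 (ℍ × ℍ) p).1
def c2 (p : Oct) : ℍ := (WithLp.equiv 2 (ℍ × ℍ) p).2
def mk (a b : ℍ) : Oct := (WithLp.equiv 2 (ℍ × ℍ)).symm (a, b)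

instance : One Oct := ⟨mk 1 0⟩

/-- Cayley–Dickson multiplication. -/
instance : Mul Oct :=
  ⟨fun p q => mk (c1 p * c1 q - star (c2 q) * c2 p) (c2 q * c1 p + c2 p * star (c1 q))⟩

/-- Octonionic conjugation. -/
instance : Star Oct := ⟨fun p => mk (star (c1 p)) (-(c2 p))⟩

/-- Inverse: `p⁻¹ = ‖p‖⁻² • (star p)` (so `0⁻¹ = 0`). -/
instance : Inv Oct := ⟨fun p => (‖p‖ ^ 2)⁻¹ • star p⟩

/-- The real inner product on `𝕆 ≅ ℝ⁸`, via polarization. -/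
def oinner (p q : Oct) : ℝ := (1 / 4) * (‖p + q‖ ^ 2 - ‖p - q‖ ^ 2)

/-- The sphere `𝕊` of imaginary units of the octonions. -/
def Sph : Set Oct := {I | I * I = -1}

/-- The slice complex plane `ℂ_I = ℝ + ℝ I ⊆ 𝕆`. -/
def CI (I : Oct) : Set Oct := {z | ∃ s t : ℝ, z = s • (1 : Oct) + t • I}

end Oct

open Oct

/-- The point `x + y I ∈ ℂ_Iⁿ ⊆ 𝕆ⁿ`. -/
def aff {n : ℕ} (x y : Fin n → ℝ) (I : Oct) : Fin n → Oct :=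
  fun m => x m • (1 : Oct) + y m • I

/-- The embedding `ℝⁿ ⊆ 𝕆ⁿ`. -/
def ofRealn {n : ℕ} (x : Fin n → ℝ) : Fin n → Oct := fun m => x m • (1 : Oct)

/-- The slice `ℂ_Iⁿ ⊆ 𝕆ⁿ`. -/
def slicen (n : ℕ) (I : Oct) : Set (Fin n → Oct) := {q | ∃ x y : Fin n → ℝ, q = aff x y I}

/-- The `n`-dimensional quadratic cone `𝕆ₛⁿ = ⋃_{I ∈ 𝕊} ℂ_Iⁿ`. -/
def cone (n : ℕ) : Set (Fin n → Oct) := ⋃ I ∈ Sph, slicen n I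

/-- The slice topology `τ_s`: a set is open iff its trace on every slice `ℂ_Iⁿ`
is open (expressed via the canonical parametrizations `(x,y) ↦ x + yI`). -/
def τs (n : ℕ) : TopologicalSpace (Fin n → Oct) :=
  ⨆ I : Sph, TopologicalSpace.coinduced
    (fun p : (Fin n → ℝ) × (Fin n → ℝ) => aff p.1 p.2 I.1) inferInstance

/-- A slice-open subset of the quadratic cone. -/
def SliceOpen (n : ℕ) (Ω : Set (Fin n → Oct)) : Prop :=
  Ω ⊆ cone n ∧ IsOpen[τs n] Ω

/-- A slice-domain: a nonempty slice-connected slice-open subset of the cone. -/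
def SliceDomain (n : ℕ) (Ω : Set (Fin n → Oct)) : Prop :=
  SliceOpen n Ω ∧ @IsConnected _ (τs n) Ω

/-- Real-connectedness: `Ω ∩ ℝⁿ` is a (pre)connected subset of `ℝⁿ`. -/
def RealConnected (n : ℕ) (Ω : Set (Fin n → Oct)) : Prop :=
  IsPreconnected {x : Fin n → ℝ | ofRealn x ∈ Ω}

/-- Axially symmetric subsets of the cone. -/
def AxSymm (n : ℕ) (Ω : Set (Fin n → Oct)) : Prop :=
  ∀ (x y : Fin n → ℝ), ∀ I ∈ Sph, ∀ J ∈ Sph, aff x y I ∈ Ω → aff x y J ∈ Ω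

/-- The upper half-space `ℝ²ⁿ₊`: pairs `(x,y)` with `y = 0` or the first
nonzero coordinate of `y` positive. -/
def pos2n (n : ℕ) : Set ((Fin n → ℝ) × (Fin n → ℝ)) :=
  {p | p.2 = 0 ∨ ∃ m : Fin n, 0 < p.2 m ∧ ∀ k : Fin n, k < m → p.2 k = 0}

/-- `Ω_{s₁}`. -/
def s1 {n : ℕ} (Ω : Set (Fin n → Oct)) : Set ((Fin n → ℝ) × (Fin n → ℝ)) :=
  {p | ∃ I ∈ Sph, aff p.1 p.2 I ∈ Ω}

/-- `Ω_{s₂}`. -/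
def s2 {n : ℕ} (Ω : Set (Fin n → Oct)) : Set ((Fin n → ℝ) × (Fin n → ℝ)) :=
  {p | ∃ J ∈ Sph, ∃ K ∈ Sph, J ≠ K ∧ aff p.1 p.2 J ∈ Ω ∧ aff p.1 p.2 K ∈ Ω}

/-- Slice functions: induced on `Ω_{s₂}⁺` by a pair `(F₁, F₂)` via
`f(x + yI) = F₁(x,y) + I·F₂(x,y)`. -/
def IsSliceFun (n : ℕ) (Ω : Set (Fin n → Oct)) (f : (Fin n → Oct) → Oct) : Prop :=
  ∃ F₁ F₂ : (Fin n → ℝ) × (Fin n → ℝ) → Oct,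
    ∀ x y : Fin n → ℝ, (x, y) ∈ s2 Ω ∩ pos2n n → ∀ I ∈ Sph, aff x y I ∈ Ω →
      f (aff x y I) = F₁ (x, y) + I * F₂ (x, y)

/-- Holomorphy of a function of `n` slice variables, read through the
parametrization `(x,y) ↦ x + yI`: continuous partial derivatives (i.e. `C¹`)
and the Cauchy–Riemann equations `(∂/∂xₘ + I ∂/∂yₘ) g = 0` on `U`. -/
def Holo (n : ℕ) (I : Oct) (g : (Fin n → ℝ) × (Fin n → ℝ) → Oct)
    (U : Set ((Fin n → ℝ) × (Fin n → ℝ))) : Prop :=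
  ContDiffOn ℝ 1 g U ∧
  ∀ p ∈ U, ∀ m : Fin n,
    fderiv ℝ g p (Pi.single m 1, 0) + I * fderiv ℝ g p (0, Pi.single m 1) = 0

/-- Weak slice regularity: each restriction `f|_{Ω ∩ ℂ_Iⁿ}` is holomorphic. -/
def WSliceReg (n : ℕ) (Ω : Set (Fin n → Oct)) (f : (Fin n → Oct) → Oct) : Prop :=
  ∀ I ∈ Sph, Holo n I (fun p => f (aff p.1 p.2 I)) {p | aff p.1 p.2 I ∈ Ω}

/-- The complex structure `σ(a,b) = (−b,a)` on `𝕆²`. -/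
def sigma2 : Oct × Oct → Oct × Oct := fun w => (-w.2, w.1)

/-- Holomorphic stem maps: `F : V → 𝕆²` extends to a `C¹` map `G` on an open
neighborhood `U ⊇ V` satisfying `(∂/∂xₘ + σ ∂/∂yₘ) G = 0` on `U`. -/
def StemHolo (n : ℕ) (V : Set ((Fin n → ℝ) × (Fin n → ℝ)))
    (F : (Fin n → ℝ) × (Fin n → ℝ) → Oct × Oct) : Prop :=
  ∃ (U : Set ((Fin n → ℝ) × (Fin n → ℝ))) (G : (Fin n → ℝ) × (Fin n → ℝ) → Oct × Oct),
    IsOpen U ∧ V ⊆ U ∧ Set.EqOn G F V ∧ ContDiffOn ℝ 1 G U ∧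
    ∀ p ∈ U, ∀ m : Fin n,
      fderiv ℝ G p (Pi.single m 1, 0) + sigma2 (fderiv ℝ G p (0, Pi.single m 1)) = 0

/-- Strong slice regularity: `f` is induced by a holomorphic stem map on `Ω_{s₁}`. -/
def SSliceReg (n : ℕ) (Ω : Set (Fin n → Oct)) (f : (Fin n → Oct) → Oct) : Prop :=
  ∃ F : (Fin n → ℝ) × (Fin n → ℝ) → Oct × Oct, StemHolo n (s1 Ω) F ∧
    ∀ x y : Fin n → ℝ, ∀ I ∈ Sph, aff x y I ∈ Ω →
      f (aff x y I) = (F (x, y)).1 + I * (F (x, y)).2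

/-- An s-basis `{I, J, K}` of the octonions. -/
def IsSBasis (I J K : Oct) : Prop :=
  I ∈ Sph ∧ J ∈ Sph ∧ K ∈ Sph ∧
  LinearIndependent ℝ ![(1 : Oct), I, J, I * J, K, J * K, I * K, (I * J) * K] ∧
  Submodule.span ℝ (Set.range ![(1 : Oct), I, J, I * J, K, J * K, I * K, (I * J) * K]) = ⊤

/-- Iterated left multiplication `L_w^β = (L_{w₁})^{β₁} ∘ ⋯ ∘ (L_{wₙ})^{βₙ}`. -/
def Lpow {n : ℕ} (w : Fin n → Oct) (β : Fin n → ℕ) : Oct → Oct :=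
  fun a => (List.finRange n).foldr (fun ℓ c => (fun o => w ℓ * o)^[β ℓ] c) a

/-- The `*`-power `(q − p)^{*α} a = ∑_{β ≤ α} C(α,β) L_q^β (L_{−p}^{α−β} a)`. -/
def starPow {n : ℕ} (p : Fin n → Oct) (α : Fin n → ℕ) (a : Oct) (q : Fin n → Oct) : Oct :=
  ∑ β ∈ Finset.Iic α, (∏ ℓ, (α ℓ).choose (β ℓ)) • Lpow q β (Lpow (-p) (α - β) a)

/-- The `ℓ`-th slice derivative `∂_ℓ f (x + w) = (∂/∂x_ℓ) f (x + w)`. -/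
def sderiv {n : ℕ} (ℓ : Fin n) (f : (Fin n → Oct) → Oct) : (Fin n → Oct) → Oct :=
  fun q => deriv (fun t : ℝ => f (fun m => q m + (if m = ℓ then t else 0) • (1 : Oct))) 0

/-- The iterated slice derivative `f^{(α)} = (∂₁)^{α₁} ⋯ (∂ₙ)^{αₙ} f`. -/
def sderivMulti {n : ℕ} (α : Fin n → ℕ) (f : (Fin n → Oct) → Oct) : (Fin n → Oct) → Oct :=
  (List.finRange n).foldr (fun ℓ g => (sderiv ℓ)^[α ℓ] g) f

/-- The slice-polydisc `P̃(q₀, r)` (relative to `I ∈ 𝕊` with `q₀ ∈ ℂ_Iⁿ`):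
points `x + yJ` with `x ± yI` in the closed polydisc `P_I(q₀, r)`. -/
def polyDisc {n : ℕ} (q₀ : Fin n → Oct) (I : Oct) (r : Fin n → ℝ) : Set (Fin n → Oct) :=
  {q | ∃ x y : Fin n → ℝ, ∃ J ∈ Sph, q = aff x y J ∧
        (∀ ℓ, ‖aff x y I ℓ - q₀ ℓ‖ ≤ r ℓ) ∧ (∀ ℓ, ‖aff x (-y) I ℓ - q₀ ℓ‖ ≤ r ℓ)}


namespace OctAux
open Oct

theorem ext' (p q : Oct) (h1 : c1 p = c1 q) (h2 : c2 p = c2 q) : p = q := (WithLp.equiv 2 (ℍ × ℍ)).injective (Prod.ext h1 h2)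
@[simp] theorem c1_mul (p q : Oct) : c1 (p * q) = c1 p * c1 q - star (c2 q) * c2 p := rfl
@[simp] theorem c2_mul (p q : Oct) : c2 (p * q) = c2 q * c1 p + c2 p * star (c1 q) := rfl
@[simp] theorem c1_add (p q : Oct) : c1 (p + q) = c1 p + c1 q := rfl
@[simp] theorem c2_add (p q : Oct) : c2 (p + q) = c2 p + c2 q := rfl
@[simp] theorem c1_neg (p : Oct) : c1 (-p) = -c1 p := rfl
@[simp] theorem c2_neg (p : Oct) : c2 (-p) = -c2 p := rfl
@[simp] theorem c1_sub (p q : Oct) : c1 (p - q) = c1 p - c1 q := rfl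
@[simp] theorem c2_sub (p q : Oct) : c2 (p - q) = c2 p - c2 q := rfl
@[simp] theorem c1_smul (r : ℝ) (p : Oct) : c1 (r • p) = r • c1 p := rfl
@[simp] theorem c2_smul (r : ℝ) (p : Oct) : c2 (r • p) = r • c2 p := rfl
@[simp] theorem c1_one : c1 (1 : Oct) = 1 := rfl
@[simp] theorem c2_one : c2 (1 : Oct) = 0 := rfl
@[simp] theorem c1_zero : c1 (0 : Oct) = 0 := rfl
@[simp] theorem c2_zero : c2 (0 : Oct) = 0 := rfl
@[simp] theorem c1_star (p : Oct) : c1 (star p) = star (c1 p) := rfl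
@[simp] theorem c2_star (p : Oct) : c2 (star p) = -(c2 p) := rfl

theorem mul_add' (a b c : Oct) : a * (b + c) = a * b + a * c := by
  apply ext' <;> simp <;> noncomm_ring
theorem add_mul' (a b c : Oct) : (a + b) * c = a * c + b * c := by
  apply ext' <;> simp <;> noncomm_ring
theorem one_mul' (a : Oct) : 1 * a = a := by apply ext' <;> simp
theorem mul_zero' (a : Oct) : a * 0 = 0 := by apply ext' <;> simp
theorem zero_mul' (a : Oct) : 0 * a = 0 := by apply ext' <;> simp
theorem neg_mul' (a b : Oct) : (-a) * b = -(a * b) := by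
  apply ext' <;> simp <;> abel
theorem mul_neg' (a b : Oct) : a * (-b) = -(a * b) := by
  apply ext' <;> simp <;> abel
theorem sub_mul' (a b c : Oct) : (a - b) * c = a * c - b * c := by
  apply ext' <;> simp <;> noncomm_ring
theorem mul_sub' (a b c : Oct) : a * (b - c) = a * b - a * c := by
  apply ext' <;> simp <;> noncomm_ring
theorem smul_mul' (r : ℝ) (a b : Oct) : (r • a) * b = r • (a * b) := by
  apply ext' <;>
    simp only [c1_mul, c2_mul, c1_smul, c2_smul, Quaternion.star_smul] <;>
    ext <;> simp [Quaternion.re_mul, Quaternion.imI_mul, Quaternion.imJ_mul,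
      Quaternion.imK_mul] <;> ring
theorem mul_smul'' (r : ℝ) (a b : Oct) : a * (r • b) = r • (a * b) := by
  apply ext' <;>
    simp only [c1_mul, c2_mul, c1_smul, c2_smul, Quaternion.star_smul] <;>
    ext <;> simp [Quaternion.re_mul, Quaternion.imI_mul, Quaternion.imJ_mul,
      Quaternion.imK_mul] <;> ring
theorem star_sub' (a b : Oct) : star (a - b) = star a - star b := by
  apply ext' <;> simp <;> abel
theorem star_neg' (a : Oct) : star (-a) = -(star a) := by apply ext' <;> simp
theorem inv_neg' (a : Oct) : (-a)⁻¹ = -(a⁻¹) := by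
  show (‖-a‖ ^ 2)⁻¹ • star (-a) = -((‖a‖ ^ 2)⁻¹ • star a)
  rw [norm_neg, star_neg', smul_neg]
theorem norm_sq' (p : Oct) : ‖p‖ ^ 2 = ‖c1 p‖ ^ 2 + ‖c2 p‖ ^ 2 :=
  WithLp.prod_norm_sq_eq_of_L2 p
theorem star_mul_self' (a : Oct) : star a * a = (‖a‖ ^ 2) • (1 : Oct) := by
  have h : ‖a‖ ^ 2 = Quaternion.normSq (c1 a) + Quaternion.normSq (c2 a) := by
    rw [norm_sq', pow_two, pow_two, ← Quaternion.normSq_eq_norm_mul_self,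
      ← Quaternion.normSq_eq_norm_mul_self]
  apply ext' <;>
    simp only [c1_mul, c2_mul, c1_star, c2_star, c1_smul, c2_smul, c1_one, c2_one, h] <;>
    ext <;>
    simp [Quaternion.re_mul, Quaternion.imI_mul, Quaternion.imJ_mul, Quaternion.imK_mul,
      Quaternion.normSq_def'] <;>
    ring

set_option maxHeartbeats 2000000 in
theorem star_alt (a b : Oct) : star a * (a * b) = (star a * a) * b := by
  apply ext' <;>
    simp <;> ext <;>
    simp [Quaternion.re_mul, Quaternion.imI_mul, Quaternion.imJ_mul, Quaternion.imK_mul] <;>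
    try ring

theorem quat_re_zero (q : ℍ) (h : q * q = -1) : q.re = 0 := by
  have h1 : q.re * q.re - q.imI * q.imI - q.imJ * q.imJ - q.imK * q.imK = -1 := by
    simpa [Quaternion.re_mul] using congrArg QuaternionAlgebra.re h
  have h2 : q.re * q.imI = 0 := by
    have := congrArg QuaternionAlgebra.imI h
    simp [Quaternion.imI_mul] at this
    linarith
  have h3 : q.re * q.imJ = 0 := by
    have := congrArg QuaternionAlgebra.imJ h
    simp [Quaternion.imJ_mul] at this
    linarith
  have h4 : q.re * q.imK = 0 := by
    have := congrArg QuaternionAlgebra.imK h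
    simp [Quaternion.imK_mul] at this
    linarith
  by_contra hre
  have hI : q.imI = 0 := by
    rcases mul_eq_zero.mp h2 with h | h
    · exact absurd h hre
    · exact h
  have hJ : q.imJ = 0 := by
    rcases mul_eq_zero.mp h3 with h | h
    · exact absurd h hre
    · exact h
  have hK : q.imK = 0 := by
    rcases mul_eq_zero.mp h4 with h | h
    · exact absurd h hre
    · exact h
  rw [hI, hJ, hK] at h1
  nlinarith [sq_nonneg q.re]

theorem sph_star {I : Oct} (hI : I ∈ Sph) : star I = -I := by
  have hII : I * I = -1 := hI
  have h2 : c2 I * (c1 I + star (c1 I)) = 0 := by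
    have := congrArg c2 hII
    simp only [c2_mul, c2_neg, c2_one, neg_zero] at this
    rw [mul_add]
    exact this
  have hre : (c1 I).re = 0 := by
    rw [Quaternion.self_add_star'] at h2
    rcases mul_eq_zero.mp h2 with h | h
    · -- c2 I = 0
      have h1 : c1 I * c1 I = -1 := by
        have := congrArg c1 hII
        simp only [c1_mul, c1_neg, c1_one, h, star_zero, zero_mul, mul_zero, sub_zero] at this
        exact this
      exact quat_re_zero _ h1
    · have h2' : (2 : ℝ) * (c1 I).re = 0 := by
        have := congrArg QuaternionAlgebra.re h
        simpa using this
      linarith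
  apply ext'
  · simp only [c1_star, c1_neg]
    ext <;> simp [hre]
  · simp

theorem sph_neg {I : Oct} (hI : I ∈ Sph) : -I ∈ Sph := by
  show (-I) * (-I) = -1
  rw [neg_mul', mul_neg', neg_neg]
  exact hI

theorem sph_mul_mul {I : Oct} (hI : I ∈ Sph) (b : Oct) : I * (I * b) = -b := by
  have h := star_alt I b
  rw [sph_star hI, neg_mul', neg_mul', (show I * I = -1 from hI)] at h
  have : (-(-1) : Oct) * b = b := by rw [neg_neg, one_mul']
  rw [this] at h
  exact neg_eq_iff_eq_neg.mp h

theorem inv_mul_cancel_left' {a : Oct} (h : a ≠ 0) (b : Oct) : a⁻¹ * (a * b) = b := by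
  show ((‖a‖ ^ 2)⁻¹ • star a) * (a * b) = b
  rw [smul_mul', star_alt, star_mul_self', smul_mul', one_mul', smul_smul,
    inv_mul_cancel₀ (pow_ne_zero 2 (norm_ne_zero_iff.mpr h)), one_smul]

theorem inv_sph_sub {J K : Oct} (hJ : J ∈ Sph) (hK : K ∈ Sph) :
    (J - K)⁻¹ = (-(‖J - K‖ ^ 2)⁻¹) • (J - K) := by
  show (‖J - K‖ ^ 2)⁻¹ • star (J - K) = _
  rw [star_sub', sph_star hJ, sph_star hK, neg_smul]
  congr 1
  rw [← smul_neg]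
  congr 1
  abel

theorem lin_core {I J K : Oct} (hJ : J ∈ Sph) (hK : K ∈ Sph) (u v : Oct) :
    (J - K) * (J * u - K * v) + I * ((J - K) * (u - v)) =
      (I - K) * ((J - K) * u) - (I - J) * ((J - K) * v) := by
  simp only [mul_sub', sub_mul', sph_mul_mul hJ, sph_mul_mul hK]
  abel

theorem lin_eq {I J K : Oct} (hJ : J ∈ Sph) (hK : K ∈ Sph) (u v : Oct) :
    (J - K)⁻¹ * (J * u - K * v) + I * ((J - K)⁻¹ * (u - v)) =
      (I - K) * ((J - K)⁻¹ * u) + (I - J) * ((K - J)⁻¹ * v) := by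
  have hKJ : (K - J)⁻¹ = -((-(‖J - K‖ ^ 2)⁻¹) • (J - K)) := by
    rw [show K - J = -(J - K) by abel, inv_neg', inv_sph_sub hJ hK]
  rw [hKJ, inv_sph_sub hJ hK]
  simp only [neg_mul', mul_neg', smul_mul', mul_smul'']
  rw [← sub_eq_add_neg, ← smul_add, ← smul_sub]
  exact congrArg (fun z => (-(‖J - K‖ ^ 2)⁻¹ : ℝ) • z) (lin_core hJ hK u v)

theorem pos_cases {n : ℕ} (y : Fin n → ℝ) (hy : y ≠ 0) :
    (∃ m : Fin n, 0 < y m ∧ ∀ k : Fin n, k < m → y k = 0) ∨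
      (∃ m : Fin n, 0 < (-y) m ∧ ∀ k : Fin n, k < m → (-y) k = 0) := by
  have hne : ∃ m, y m ≠ 0 := Function.ne_iff.mp hy
  classical
  set s : Finset (Fin n) := Finset.univ.filter fun m => y m ≠ 0 with hs_def
  have hs : s.Nonempty := ⟨hne.choose, by simp [hs_def, hne.choose_spec]⟩
  set m := s.min' hs with hm
  have hmem : y m ≠ 0 := by
    have := s.min'_mem hs
    simp [hs_def] at this
    exact this
  have hk : ∀ k : Fin n, k < m → y k = 0 := by
    intro k hkm
    by_contra h0
    exact absurd (s.min'_le k (by simp [hs_def, h0])) (not_le.mpr hkm)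
  rcases hmem.lt_or_gt with h | h
  · right
    exact ⟨m, by simpa using h, fun k hkm => by simp [hk k hkm]⟩
  · left
    exact ⟨m, h, hk⟩

end OctAux

open OctAux

/-- Equivalent characterizations of slice functions on a subset
`Ω` of the quadratic cone `𝕆ₛⁿ`: (i) slice function; (ii) stem-function form on
`Ω_{s₁}`; (iii) linear form for `I`; (iv) linear form for `f`. -/
theorem slice_function_tfae (n : ℕ) (hn : 1 ≤ n) (Ω : Set (Fin n → Oct))
    (hΩ : Ω ⊆ cone n) (f : (Fin n → Oct) → Oct) :
    [IsSliceFun n Ω f,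
     ∃ F₁ F₂ : (Fin n → ℝ) × (Fin n → ℝ) → Oct,
       ∀ x y : Fin n → ℝ, (x, y) ∈ s1 Ω → ∀ I ∈ Sph, aff x y I ∈ Ω →
         f (aff x y I) = F₁ (x, y) + I * F₂ (x, y),
     ∀ (x y : Fin n → ℝ), ∀ I ∈ Sph, ∀ J ∈ Sph, ∀ K ∈ Sph, J ≠ K →
       aff x y I ∈ Ω → aff x y J ∈ Ω → aff x y K ∈ Ω →
       f (aff x y I) =
         (J - K)⁻¹ * (J * f (aff x y J) - K * f (aff x y K)) +
           I * ((J - K)⁻¹ * (f (aff x y J) - f (aff x y K))),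
     ∀ (x y : Fin n → ℝ), ∀ I ∈ Sph, ∀ J ∈ Sph, ∀ K ∈ Sph, J ≠ K →
       aff x y I ∈ Ω → aff x y J ∈ Ω → aff x y K ∈ Ω →
       f (aff x y I) =
         (I - K) * ((J - K)⁻¹ * f (aff x y J)) +
           (I - J) * ((K - J)⁻¹ * f (aff x y K))].TFAE := by
  classical
  have two_to_one : (∃ F₁ F₂ : (Fin n → ℝ) × (Fin n → ℝ) → Oct,
       ∀ x y : Fin n → ℝ, (x, y) ∈ s1 Ω → ∀ I ∈ Sph, aff x y I ∈ Ω →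
         f (aff x y I) = F₁ (x, y) + I * F₂ (x, y)) → IsSliceFun n Ω f := by
    rintro ⟨F₁, F₂, h⟩
    refine ⟨F₁, F₂, fun x y hxy I hI hm => ?_⟩
    obtain ⟨hs2, -⟩ := hxy
    obtain ⟨J, hJ, K, hK, -, hJm, -⟩ := hs2
    exact h x y ⟨J, hJ, hJm⟩ I hI hm
  tfae_have 1 → 3
  | ⟨F₁, F₂, hF⟩ => by
    intro x y I hI J hJ K hK hJK hIm hJm hKm
    have hJK0 : J - K ≠ 0 := sub_ne_zero.mpr hJK
    by_cases hy : y = 0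
    · subst hy
      have e : ∀ L : Oct, aff x (0 : Fin n → ℝ) L = aff x 0 I := by
        intro L; funext m; simp [aff]
      rw [e J, e K, sub_self, mul_zero', mul_zero', add_zero, ← sub_mul',
        inv_mul_cancel_left' hJK0]
    · rcases pos_cases y hy with hp | hp
      · have hs2 : (x, y) ∈ s2 Ω ∩ pos2n n :=
          ⟨⟨J, hJ, K, hK, hJK, hJm, hKm⟩, Or.inr hp⟩
        rw [hF x y hs2 I hI hIm, hF x y hs2 J hJ hJm, hF x y hs2 K hK hKm]
        have h1 : J * (F₁ (x, y) + J * F₂ (x, y)) - K * (F₁ (x, y) + K * F₂ (x, y)) =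
            (J - K) * F₁ (x, y) := by
          simp only [mul_add', sph_mul_mul hJ, sph_mul_mul hK, sub_mul']
          abel
        have h2 : (F₁ (x, y) + J * F₂ (x, y)) - (F₁ (x, y) + K * F₂ (x, y)) =
            (J - K) * F₂ (x, y) := by
          simp only [sub_mul']
          abel
        rw [h1, h2, inv_mul_cancel_left' hJK0, inv_mul_cancel_left' hJK0]
      · have haff : ∀ L : Oct, aff x y L = aff x (-y) (-L) := by
          intro L; funext m; simp [aff]
        have hs2 : (x, -y) ∈ s2 Ω ∩ pos2n n :=
          ⟨⟨-J, sph_neg hJ, -K, sph_neg hK, fun hc => hJK (neg_injective hc),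
            by rw [← haff J]; exact hJm, by rw [← haff K]; exact hKm⟩, Or.inr hp⟩
        set A := F₁ (x, -y) with hA
        set B := F₂ (x, -y) with hB
        have eI : f (aff x y I) = A + (-I) * B := by
          rw [haff I]
          exact hF x (-y) hs2 (-I) (sph_neg hI) (by rw [← haff I]; exact hIm)
        have eJ : f (aff x y J) = A + (-J) * B := by
          rw [haff J]
          exact hF x (-y) hs2 (-J) (sph_neg hJ) (by rw [← haff J]; exact hJm)
        have eK : f (aff x y K) = A + (-K) * B := by
          rw [haff K]
          exact hF x (-y) hs2 (-K) (sph_neg hK) (by rw [← haff K]; exact hKm)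
        rw [eI, eJ, eK]
        have h1 : J * (A + (-J) * B) - K * (A + (-K) * B) = (J - K) * A := by
          simp only [mul_add', neg_mul', mul_neg', sph_mul_mul hJ, sph_mul_mul hK,
            sub_mul', neg_neg]
          abel
        have h2 : (A + (-J) * B) - (A + (-K) * B) = (J - K) * (-B) := by
          simp only [neg_mul', mul_neg', sub_mul']
          abel
        rw [h1, h2, inv_mul_cancel_left' hJK0, inv_mul_cancel_left' hJK0,
          neg_mul', mul_neg']
  tfae_have 3 → 4
  | h3 => by
    intro x y I hI J hJ K hK hJK hIm hJm hKm
    rw [h3 x y I hI J hJ K hK hJK hIm hJm hKm]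
    exact lin_eq hJ hK _ _
  tfae_have 4 → 3
  | h4 => by
    intro x y I hI J hJ K hK hJK hIm hJm hKm
    rw [h4 x y I hI J hJ K hK hJK hIm hJm hKm]
    exact (lin_eq hJ hK _ _).symm
  tfae_have 3 → 2
  | h3 => by
    have key : ∀ p : (Fin n → ℝ) × (Fin n → ℝ), ∃ w : Oct × Oct,
        ∀ I ∈ Sph, aff p.1 p.2 I ∈ Ω → f (aff p.1 p.2 I) = w.1 + I * w.2 := by
      intro p
      by_cases h2 : ∃ J ∈ Sph, ∃ K ∈ Sph, J ≠ K ∧ aff p.1 p.2 J ∈ Ω ∧ aff p.1 p.2 K ∈ Ω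
      · obtain ⟨J, hJ, K, hK, hJK, hJm, hKm⟩ := h2
        exact ⟨((J - K)⁻¹ * (J * f (aff p.1 p.2 J) - K * f (aff p.1 p.2 K)),
                (J - K)⁻¹ * (f (aff p.1 p.2 J) - f (aff p.1 p.2 K))),
          fun I hI hIm => h3 p.1 p.2 I hI J hJ K hK hJK hIm hJm hKm⟩
      · by_cases h1 : ∃ I ∈ Sph, aff p.1 p.2 I ∈ Ω
        · obtain ⟨I₀, hI₀, hI₀m⟩ := h1
          refine ⟨(f (aff p.1 p.2 I₀), 0), fun I hI hIm => ?_⟩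
          have hII : I = I₀ := by
            by_contra hne
            exact h2 ⟨I, hI, I₀, hI₀, hne, hIm, hI₀m⟩
          rw [hII, mul_zero', add_zero]
        · exact ⟨0, fun I hI hIm => absurd ⟨I, hI, hIm⟩ h1⟩
    choose G hG using key
    exact ⟨fun p => (G p).1, fun p => (G p).2,
      fun x y _ I hI hm => hG (x, y) I hI hm⟩
  tfae_have 2 → 1
  | h2 => two_to_one h2
  tfae_finish


end
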